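/- arXiv:2210.07219 — 5 statements merged into one kernel-verified Lean document; each statement's English description precedes it below -/
import Mathlib

section
/- Let $X \in \mathbb{R}^{2n\times 2n}$ be the block matrix $X = \begin{pmatrix} C & I_n \\ -C^2 + R & -C \end{pmatrix}$ where $C \in \mathbb{R}^{n\times n}$ is symmetric and $R \in \mathbb{R}^{n\times n}$ is arbitrary. Then for all $k \in \mathbb{N}$, $X^{2k} = \begin{pmatrix} R^k & 0 \\ R^k C - C R^k & R^k \end{pmatrix}$ and $X^{2k+1} = \begin{pmatrix} R^k C & R^k \\ R^{k+1} - C R^k C & -C R^k \end{pmatrix}$. -/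
/-! The square of `X` is block lower triangular, `X² = [[R, 0], [RC - CR, R]]`, and the
off-diagonal block of its `k`-th power telescopes to `RᵏC - CRᵏ`. Odd powers follow by one more
multiplication with `X`. -/

open Matrix

namespace Matrix

variable {n α : Type*} [Fintype n] [DecidableEq n] [Ring α]

theorem fromBlocks_mul_self_neg_sq_add (C R : Matrix n n α) :
    fromBlocks C 1 (-(C * C) + R) (-C) * fromBlocks C 1 (-(C * C) + R) (-C) =
      fromBlocks R 0 (R * C - C * R) R := by
  rw [fromBlocks_multiply]
  congr 1 <;> noncomm_ring

theorem fromBlocks_commutator_pow (C R : Matrix n n α) (k : ℕ) :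
    fromBlocks R 0 (R * C - C * R) R ^ k =
      fromBlocks (R ^ k) 0 (R ^ k * C - C * R ^ k) (R ^ k) := by
  induction k with
  | zero => simp [fromBlocks_one]
  | succ k ih =>
    rw [pow_succ, ih, fromBlocks_multiply, pow_succ]
    congr 1 <;> noncomm_ring

end Matrix

theorem stmt0_general (n : ℕ) (C R : Matrix (Fin n) (Fin n) ℝ)
    (X : Matrix (Fin n ⊕ Fin n) (Fin n ⊕ Fin n) ℝ)
    (hX : X = Matrix.fromBlocks C 1 (-(C * C) + R) (-C)) :
    ∀ k : ℕ,
      X ^ (2 * k) = Matrix.fromBlocks (R ^ k) 0 (R ^ k * C - C * R ^ k) (R ^ k) ∧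
      X ^ (2 * k + 1) =
        Matrix.fromBlocks (R ^ k * C) (R ^ k) (R ^ (k + 1) - C * R ^ k * C) (-(C * R ^ k)) := by
  intro k
  have even : X ^ (2 * k) = fromBlocks (R ^ k) 0 (R ^ k * C - C * R ^ k) (R ^ k) := by
    rw [pow_mul, sq, hX, fromBlocks_mul_self_neg_sq_add, fromBlocks_commutator_pow]
  refine ⟨even, ?_⟩
  rw [pow_succ, even, hX, fromBlocks_multiply, pow_succ]
  congr 1 <;> noncomm_ring

theorem stmt0 (n : ℕ) (C R : Matrix (Fin n) (Fin n) ℝ) (hC : Cᵀ = C)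
    (X : Matrix (Fin n ⊕ Fin n) (Fin n ⊕ Fin n) ℝ)
    (hX : X = Matrix.fromBlocks C 1 (-(C * C) + R) (-C)) :
    ∀ k : ℕ,
      X ^ (2 * k) = Matrix.fromBlocks (R ^ k) 0 (R ^ k * C - C * R ^ k) (R ^ k) ∧
      X ^ (2 * k + 1) =
        Matrix.fromBlocks (R ^ k * C) (R ^ k) (R ^ (k + 1) - C * R ^ k * C) (-(C * R ^ k)) :=
  stmt0_general n C R X hX
end

section
/- Let $E \in \mathbb{R}^{n\times n}$ be a matrix with operator norm $\|E\|_2 < 1/4$. Then $|\log\det(I + E) - \mathrm{tr}(E)| \le \|E\|_F^2$, where $\|E\|_F$ is the Frobenius norm. -/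
open Matrix Polynomial
set_option synthInstance.maxHeartbeats 400000
set_option maxHeartbeats 1000000

section Aux

lemma aux_tr_sq (n : ℕ) (A : Matrix (Fin n) (Fin n) ℝ) :
    Matrix.trace (Aᵀ * A) = ∑ p : Fin n × Fin n, (A p.1 p.2)^2 := by
  rw [Matrix.trace, Fintype.sum_prod_type]
  simp only [Matrix.diag, Matrix.mul_apply, Matrix.transpose_apply, sq]
  exact Finset.sum_comm

lemma aux_tr_sq_nonneg (n : ℕ) (A : Matrix (Fin n) (Fin n) ℝ) :
    0 ≤ Matrix.trace (Aᵀ * A) := by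
  rw [aux_tr_sq]; positivity

lemma aux_tr_CS (n : ℕ) (A B : Matrix (Fin n) (Fin n) ℝ) :
    |Matrix.trace (A * B)| ≤
      Real.sqrt (Matrix.trace (Aᵀ * A)) * Real.sqrt (Matrix.trace (Bᵀ * B)) := by
  have h1 : Matrix.trace (A * B) = ∑ p : Fin n × Fin n, A p.1 p.2 * B p.2 p.1 := by
    rw [Matrix.trace, Fintype.sum_prod_type]
    simp [Matrix.diag, Matrix.mul_apply]
  have h2 : Matrix.trace (Bᵀ * B) = ∑ p : Fin n × Fin n, (B p.2 p.1)^2 := by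
    rw [aux_tr_sq]
    exact (Fintype.sum_equiv (Equiv.prodComm _ _) _ _ (fun p => rfl)).symm
  have key := Finset.sum_mul_sq_le_sq_mul_sq Finset.univ
      (fun p : Fin n × Fin n => A p.1 p.2) (fun p => B p.2 p.1)
  rw [← Real.sqrt_mul_self (abs_nonneg _), ← Real.sqrt_mul (aux_tr_sq_nonneg n A)]
  refine Real.sqrt_le_sqrt ?_
  rw [← sq, sq_abs, h1]
  calc (∑ p : Fin n × Fin n, A p.1 p.2 * B p.2 p.1)^2 ≤ _ := key
    _ = _ := by rw [aux_tr_sq, h2]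

lemma aux_col_bound (n : ℕ) (M : Matrix (Fin n) (Fin n) ℝ) (v : Fin n → ℝ) :
    ∑ i, (M.mulVec v i)^2 ≤ ‖Matrix.toEuclideanCLM (𝕜 := ℝ) M‖^2 * ∑ i, (v i)^2 := by
  set x : EuclideanSpace ℝ (Fin n) := (WithLp.equiv _ _).symm v with hx
  have h1 : Matrix.toEuclideanCLM (𝕜 := ℝ) M x = (WithLp.equiv _ _).symm (M.mulVec v) := by
    rw [hx]; rfl
  have h2 : ‖Matrix.toEuclideanCLM (𝕜 := ℝ) M x‖ ≤ ‖Matrix.toEuclideanCLM (𝕜 := ℝ) M‖ * ‖x‖ :=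
    (Matrix.toEuclideanCLM (𝕜 := ℝ) M).le_opNorm x
  have hnx : ‖x‖^2 = ∑ i, (v i)^2 := by
    rw [EuclideanSpace.norm_eq, Real.sq_sqrt (by positivity)]
    simp [hx]
  have hny : ‖Matrix.toEuclideanCLM (𝕜 := ℝ) M x‖^2 = ∑ i, (M.mulVec v i)^2 := by
    rw [h1, EuclideanSpace.norm_eq, Real.sq_sqrt (by positivity)]
    simp
  calc ∑ i, (M.mulVec v i)^2 = ‖Matrix.toEuclideanCLM (𝕜 := ℝ) M x‖^2 := hny.symm
    _ ≤ (‖Matrix.toEuclideanCLM (𝕜 := ℝ) M‖ * ‖x‖)^2 := by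
        apply pow_le_pow_left₀ (norm_nonneg _) h2
    _ = _ := by rw [mul_pow, hnx]

lemma aux_tr_sq' (n : ℕ) (A : Matrix (Fin n) (Fin n) ℝ) :
    Matrix.trace (Aᵀ * A) = ∑ j, ∑ i, (A i j)^2 := by
  rw [Matrix.trace]
  simp [Matrix.diag, Matrix.mul_apply, sq]

lemma aux_mul_frob (n : ℕ) (M A : Matrix (Fin n) (Fin n) ℝ) :
    Matrix.trace ((M * A)ᵀ * (M * A)) ≤
      ‖Matrix.toEuclideanCLM (𝕜 := ℝ) M‖^2 * Matrix.trace (Aᵀ * A) := by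
  rw [aux_tr_sq', aux_tr_sq', Finset.mul_sum]
  apply Finset.sum_le_sum
  intro j _
  have : ∀ i, (M * A) i j = M.mulVec (fun k => A k j) i := by
    intro i; simp [Matrix.mul_apply, Matrix.mulVec, dotProduct]
  simp_rw [this]
  exact aux_col_bound n M (fun k => A k j)

variable {n : ℕ} [NeZero n]

lemma aux_isUnit_one_add' {X : Matrix (Fin n) (Fin n) ℝ}
    (h : ‖Matrix.toEuclideanCLM (𝕜 := ℝ) X‖ < 1) :
    IsUnit (Matrix.toEuclideanCLM (𝕜 := ℝ) (1 + X)) := by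
  have h1 : IsUnit ((1 : EuclideanSpace ℝ (Fin n) →L[ℝ] EuclideanSpace ℝ (Fin n)) -
      (-(Matrix.toEuclideanCLM (𝕜 := ℝ) X))) :=
    isUnit_one_sub_of_norm_lt_one (by simpa using h)
  have h2 : (1 : _ →L[ℝ] _) - (-(Matrix.toEuclideanCLM (𝕜 := ℝ) X)) =
      Matrix.toEuclideanCLM (𝕜 := ℝ) (1 + X) := by
    simp [map_add, sub_neg_eq_add]
  rwa [h2] at h1

lemma aux_isUnit_one_add {X : Matrix (Fin n) (Fin n) ℝ}
    (h : ‖Matrix.toEuclideanCLM (𝕜 := ℝ) X‖ < 1) :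
    IsUnit ((1 : Matrix (Fin n) (Fin n) ℝ) + X) := by
  have h1 := aux_isUnit_one_add' h
  have h3 : (1 : Matrix (Fin n) (Fin n) ℝ) + X =
      (Matrix.toEuclideanCLM (𝕜 := ℝ) (n := Fin n)).symm
        (Matrix.toEuclideanCLM (𝕜 := ℝ) (1 + X)) := by simp
  rw [h3]
  exact h1.map (Matrix.toEuclideanCLM (𝕜 := ℝ) (n := Fin n)).symm

lemma aux_det_one_add_ne {X : Matrix (Fin n) (Fin n) ℝ}
    (h : ‖Matrix.toEuclideanCLM (𝕜 := ℝ) X‖ < 1) :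
    ((1 : Matrix (Fin n) (Fin n) ℝ) + X).det ≠ 0 :=
  IsUnit.ne_zero ((Matrix.isUnit_iff_isUnit_det _).mp (aux_isUnit_one_add h))

lemma aux_inv_norm_le {X : Matrix (Fin n) (Fin n) ℝ}
    (h : ‖Matrix.toEuclideanCLM (𝕜 := ℝ) X‖ < 1) :
    ‖Matrix.toEuclideanCLM (𝕜 := ℝ) (((1 : Matrix (Fin n) (Fin n) ℝ) + X)⁻¹)‖ ≤
      (1 - ‖Matrix.toEuclideanCLM (𝕜 := ℝ) X‖)⁻¹ := by
  obtain ⟨u, hu⟩ := aux_isUnit_one_add h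
  have hinv : ((1 : Matrix (Fin n) (Fin n) ℝ) + X)⁻¹ = ↑u⁻¹ := by
    rw [← hu, Matrix.coe_units_inv]
  set v : (EuclideanSpace ℝ (Fin n) →L[ℝ] EuclideanSpace ℝ (Fin n))ˣ :=
    Units.oneSub (-(Matrix.toEuclideanCLM (𝕜 := ℝ) X)) (by simpa using h) with hv
  have hvval : (v : _ →L[ℝ] _) = Matrix.toEuclideanCLM (𝕜 := ℝ) (1 + X) := by
    simp [hv, Units.oneSub, map_add, sub_neg_eq_add]
  have hmul : (v : _ →L[ℝ] _) * Matrix.toEuclideanCLM (𝕜 := ℝ) ((↑u⁻¹ : Matrix (Fin n) (Fin n) ℝ)) = 1 := by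
    rw [hvval, ← _root_.map_mul, ← hu, ← map_one (Matrix.toEuclideanCLM (𝕜 := ℝ) (n := Fin n))]
    congr 1
    exact u.mul_inv
  have heq : Matrix.toEuclideanCLM (𝕜 := ℝ) ((↑u⁻¹ : Matrix (Fin n) (Fin n) ℝ)) = (↑v⁻¹ : _ →L[ℝ] _) :=
    (Units.inv_eq_of_mul_eq_one_right hmul).symm
  rw [hinv, heq]
  have hval : (↑v⁻¹ : _ →L[ℝ] _) = ∑' k : ℕ, (-(Matrix.toEuclideanCLM (𝕜 := ℝ) X)) ^ k := rfl
  rw [hval]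
  have h4 := tsum_geometric_le_of_norm_lt_one
    (-(Matrix.toEuclideanCLM (𝕜 := ℝ) X)) (by simpa using h)
  have h1 : ‖(1 : EuclideanSpace ℝ (Fin n) →L[ℝ] EuclideanSpace ℝ (Fin n))‖ ≤ 1 :=
    ContinuousLinearMap.norm_id_le
  simp only [norm_neg] at h4
  linarith

end Aux

section Deriv

lemma aux_derivA (n : ℕ) (M : Matrix (Fin n) (Fin n) ℝ) :
    HasDerivAt (fun s : ℝ => (1 + s • M).det) (Matrix.trace M) 0 := by
  have key : ∀ s : ℝ, (1 + s • M).det =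
      1 + Matrix.trace M * s + ((1 + (X : ℝ[X]) • M.map C).det).divX.divX.eval s * s ^ 2 :=
    fun s => Matrix.det_one_add_smul s M
  have h0 : HasDerivAt (fun s : ℝ =>
      1 + Matrix.trace M * s + ((1 + (X : ℝ[X]) • M.map C).det).divX.divX.eval s * s ^ 2)
      (Matrix.trace M) 0 := by
    have h1 : HasDerivAt (fun s : ℝ => 1 + Matrix.trace M * s) (Matrix.trace M) 0 := by
      simpa using (hasDerivAt_id (0:ℝ)).const_mul (Matrix.trace M) |>.const_add 1
    have h2 : HasDerivAt (fun s : ℝ =>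
        ((1 + (X : ℝ[X]) • M.map C).det).divX.divX.eval s * s ^ 2) 0 0 := by
      have hp := Polynomial.hasDerivAt ((1 + (X : ℝ[X]) • M.map C).det).divX.divX (0:ℝ)
      have hq : HasDerivAt (fun s : ℝ => s ^ 2) 0 (0:ℝ) := by
        simpa using hasDerivAt_pow 2 (0:ℝ)
      simpa [Pi.mul_def] using hp.mul hq
    simpa [Pi.add_def] using h1.add h2
  exact h0.congr_of_eventuallyEq (Filter.Eventually.of_forall fun s => key s)

lemma aux_derivB (n : ℕ) (E : Matrix (Fin n) (Fin n) ℝ) (t₀ : ℝ)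
    (h : IsUnit ((1 : Matrix (Fin n) (Fin n) ℝ) + t₀ • E).det) :
    HasDerivAt (fun t : ℝ => (1 + t • E).det)
      ((1 + t₀ • E).det * Matrix.trace ((1 + t₀ • E)⁻¹ * E)) t₀ := by
  set A := (1 : Matrix (Fin n) (Fin n) ℝ) + t₀ • E with hA
  have hAM : A * (A⁻¹ * E) = E := by
    rw [← mul_assoc, Matrix.mul_nonsing_inv A h, one_mul]
  have key : ∀ t : ℝ, (1 + t • E).det = A.det * (1 + (t - t₀) • (A⁻¹ * E)).det := by
    intro t
    rw [← Matrix.det_mul]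
    congr 1
    rw [mul_add, mul_one, Matrix.mul_smul, hAM, hA]
    rw [add_assoc, ← add_smul]
    ring_nf
  have hshift : HasDerivAt (fun t : ℝ => (1 + (t - t₀) • (A⁻¹ * E)).det)
      (Matrix.trace (A⁻¹ * E)) t₀ := by
    have hsub : HasDerivAt (fun t : ℝ => t - t₀) 1 t₀ := by
      simpa using (hasDerivAt_id t₀).sub_const t₀
    have hd : HasDerivAt (fun s : ℝ => (1 + s • (A⁻¹ * E)).det) (Matrix.trace (A⁻¹ * E))
        ((fun t : ℝ => t - t₀) t₀) := by
      simp only [sub_self]; exact aux_derivA n (A⁻¹ * E)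
    have := HasDerivAt.comp (h₂ := fun s : ℝ => (1 + s • (A⁻¹ * E)).det)
      (h := fun t : ℝ => t - t₀) t₀ hd hsub
    simpa [Function.comp_def] using this
  have := hshift.const_mul A.det
  exact this.congr_of_eventuallyEq (Filter.Eventually.of_forall fun t => key t)

end Deriv

theorem stmt1 (n : ℕ) (E : Matrix (Fin n) (Fin n) ℝ)
    (hE : ‖Matrix.toEuclideanCLM (𝕜 := ℝ) E‖ < 1 / 4) :
    |Real.log (1 + E).det - Matrix.trace E| ≤ Real.sqrt (Matrix.trace (Eᵀ * E)) ^ 2 := by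
  rcases Nat.eq_zero_or_pos n with hn0 | hn0
  · subst hn0
    simp [Matrix.det_fin_zero, Matrix.trace]
  haveI : NeZero n := ⟨hn0.ne'⟩
  set c := Matrix.trace (Eᵀ * E) with hc
  have hc0 : 0 ≤ c := aux_tr_sq_nonneg n E
  -- norm of t•E
  have hnorm : ∀ t : ℝ, t ∈ Set.Icc (0:ℝ) 1 →
      ‖Matrix.toEuclideanCLM (𝕜 := ℝ) (t • E)‖ ≤ 1/4 := by
    intro t ht
    have hsm : Matrix.toEuclideanCLM (𝕜 := ℝ) (t • E) =
        t • Matrix.toEuclideanCLM (𝕜 := ℝ) E := _root_.map_smul _ t E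
    rw [hsm, norm_smul t (Matrix.toEuclideanCLM (𝕜 := ℝ) E), Real.norm_eq_abs,
      abs_of_nonneg ht.1]
    calc t * ‖Matrix.toEuclideanCLM (𝕜 := ℝ) E‖ ≤ 1 * (1/4) := by
          apply mul_le_mul ht.2 hE.le (norm_nonneg _) zero_le_one
      _ = 1/4 := one_mul _
  have hlt1 : ∀ t : ℝ, t ∈ Set.Icc (0:ℝ) 1 →
      ‖Matrix.toEuclideanCLM (𝕜 := ℝ) (t • E)‖ < 1 := fun t ht =>
    lt_of_le_of_lt (hnorm t ht) (by norm_num)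
  have hdet : ∀ t : ℝ, t ∈ Set.Icc (0:ℝ) 1 → ((1 : Matrix (Fin n) (Fin n) ℝ) + t • E).det ≠ 0 :=
    fun t ht => aux_det_one_add_ne (hlt1 t ht)
  have hunit : ∀ t : ℝ, t ∈ Set.Icc (0:ℝ) 1 →
      IsUnit ((1 : Matrix (Fin n) (Fin n) ℝ) + t • E).det := fun t ht =>
    (Matrix.isUnit_iff_isUnit_det _).mp (aux_isUnit_one_add (hlt1 t ht))
  have hinvnorm : ∀ t : ℝ, t ∈ Set.Icc (0:ℝ) 1 →
      ‖Matrix.toEuclideanCLM (𝕜 := ℝ) (((1 : Matrix (Fin n) (Fin n) ℝ) + t • E)⁻¹)‖ ≤ 4/3 := by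
    intro t ht
    refine le_trans (aux_inv_norm_le (hlt1 t ht)) ?_
    have h1 := hnorm t ht
    rw [show (4:ℝ)/3 = (3/4)⁻¹ by norm_num]
    apply inv_anti₀ (by norm_num)
    linarith
  -- the function and its derivative
  set g : ℝ → ℝ := fun t => Real.log ((1 + t • E).det) - t * Matrix.trace E with hg
  set g' : ℝ → ℝ := fun t =>
    -(t * Matrix.trace (((1 : Matrix (Fin n) (Fin n) ℝ) + t • E)⁻¹ * (E * E))) with hg'
  have hderiv : ∀ t : ℝ, t ∈ Set.Icc (0:ℝ) 1 → HasDerivAt g (g' t) t := by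
    intro t ht
    set A := (1 : Matrix (Fin n) (Fin n) ℝ) + t • E with hA
    have hD := aux_derivB n E t (hunit t ht)
    have hlog : HasDerivAt (fun u : ℝ => Real.log ((1 + u • E).det))
        (Matrix.trace (A⁻¹ * E)) t := by
      have h2 : HasDerivAt Real.log (((1 + t • E).det)⁻¹)
          ((fun u : ℝ => (1 + u • E).det) t) := Real.hasDerivAt_log (hdet t ht)
      have h3 := HasDerivAt.comp (h₂ := Real.log) (h := fun u : ℝ => (1 + u • E).det) t h2 hD
      have h4 : ((1 + t • E).det)⁻¹ * ((1 + t • E).det * Matrix.trace (A⁻¹ * E))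
          = Matrix.trace (A⁻¹ * E) := by
        rw [← mul_assoc, inv_mul_cancel₀ (hdet t ht), one_mul]
      rw [← h4]
      exact h3
    have hlin : HasDerivAt (fun u : ℝ => u * Matrix.trace E) (Matrix.trace E) t := by
      simpa using (hasDerivAt_id t).mul_const (Matrix.trace E)
    have hsub := hlog.sub hlin
    have hkey : Matrix.trace (A⁻¹ * E) - Matrix.trace E = g' t := by
      have hAinvA : A⁻¹ * A = 1 := Matrix.nonsing_inv_mul A (hunit t ht)
      have e1 : A⁻¹ * E - E = A⁻¹ * (E - A * E) := by
        rw [Matrix.mul_sub, ← mul_assoc, hAinvA, one_mul]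
      have e2 : E - A * E = -(t • (E * E)) := by
        rw [hA, add_mul, one_mul, Matrix.smul_mul]
        abel
      rw [hg', ← Matrix.trace_sub, e1, e2, Matrix.mul_neg, Matrix.mul_smul,
        Matrix.trace_neg, Matrix.trace_smul]
      simp [hA]
    rw [← hkey]
    exact hsub
  -- bound on the derivative
  have hbound : ∀ t : ℝ, t ∈ Set.Icc (0:ℝ) 1 → ‖g' t‖ ≤ c * (2 * t) := by
    intro t ht
    set A := (1 : Matrix (Fin n) (Fin n) ℝ) + t • E with hA
    have htr : |Matrix.trace (A⁻¹ * (E * E))| ≤ (4/3) * c := by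
      rw [← mul_assoc]
      refine le_trans (aux_tr_CS n (A⁻¹ * E) E) ?_
      have h5 : Matrix.trace ((A⁻¹ * E)ᵀ * (A⁻¹ * E)) ≤
          ‖Matrix.toEuclideanCLM (𝕜 := ℝ) A⁻¹‖^2 * c := aux_mul_frob n (A⁻¹) E
      have h6 : Real.sqrt (Matrix.trace ((A⁻¹ * E)ᵀ * (A⁻¹ * E))) ≤
          ‖Matrix.toEuclideanCLM (𝕜 := ℝ) A⁻¹‖ * Real.sqrt c := by
        refine le_trans (Real.sqrt_le_sqrt h5) ?_
        rw [Real.sqrt_mul (sq_nonneg _), Real.sqrt_sq (norm_nonneg _)]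
      refine le_trans (mul_le_mul_of_nonneg_right h6 (Real.sqrt_nonneg _)) ?_
      rw [mul_assoc, Real.mul_self_sqrt hc0]
      exact mul_le_mul_of_nonneg_right (hinvnorm t ht) hc0
    rw [hg']
    simp only [norm_neg, Real.norm_eq_abs, abs_mul, abs_of_nonneg ht.1]
    calc t * |Matrix.trace (A⁻¹ * (E * E))| ≤ t * ((4/3) * c) :=
          mul_le_mul_of_nonneg_left htr ht.1
      _ ≤ c * (2 * t) := by nlinarith [ht.1, hc0]
  -- continuity of g on [0,1]
  have hcontD : Continuous (fun t : ℝ => ((1 : Matrix (Fin n) (Fin n) ℝ) + t • E).det) := by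
    apply Continuous.matrix_det
    exact continuous_const.add (continuous_id.smul continuous_const)
  have hcont : ContinuousOn g (Set.Icc (0:ℝ) 1) := by
    apply ContinuousOn.sub
    · exact ContinuousOn.log hcontD.continuousOn (fun t ht => hdet t ht)
    · exact (continuous_id.mul continuous_const).continuousOn
  -- boundary function
  have hB : ∀ x : ℝ, HasDerivAt (fun t : ℝ => c * t^2) (c * (2 * x)) x := by
    intro x
    have := (hasDerivAt_pow 2 x).const_mul c
    simpa using this
  have main := image_norm_le_of_norm_deriv_right_le_deriv_boundary
    (f := g) (f' := g') (a := 0) (b := 1)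
    hcont
    (fun x hx => (hderiv x ⟨hx.1, hx.2.le⟩).hasDerivWithinAt)
    (by simp [hg, Real.log_one] : ‖g 0‖ ≤ c * (0:ℝ)^2)
    hB
    (fun x hx => hbound x ⟨hx.1, hx.2.le⟩)
  have h1 : ‖g 1‖ ≤ c * 1^2 := main (Set.mem_Icc.mpr ⟨zero_le_one, le_refl 1⟩)
  rw [Real.sq_sqrt hc0]
  have hg1 : g 1 = Real.log (1 + E).det - Matrix.trace E := by
    rw [hg]; simp
  rw [← hg1]
  simpa using h1
end

section
/- Let $g$ and $g'$ be positive definite $n\times n$ matrices with $(1-\delta)g \preceq g' \preceq (1+\delta)g$ for some $0\le\delta<1$. Then for any vector $p\in\mathbb{R}^n$, $\|(g^{-1} - g'^{-1})p\|_{g} \le \frac{\delta}{1-\delta}\|p\|_{g^{-1}}$. -/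
open Matrix

private lemma symmdot {n : ℕ} {M : Matrix (Fin n) (Fin n) ℝ} (hM : Mᵀ = M)
    (x y : Fin n → ℝ) : x ⬝ᵥ M *ᵥ y = y ⬝ᵥ M *ᵥ x := by
  rw [dotProduct_mulVec, ← mulVec_transpose, hM, dotProduct_comm]

private lemma quad_add {n : ℕ} (M : Matrix (Fin n) (Fin n) ℝ) (x y : Fin n → ℝ) :
    (x + y) ⬝ᵥ M *ᵥ (x + y)
      = x ⬝ᵥ M *ᵥ x + x ⬝ᵥ M *ᵥ y + y ⬝ᵥ M *ᵥ x + y ⬝ᵥ M *ᵥ y := by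
  simp [mulVec_add, dotProduct_add, add_dotProduct]; ring

private lemma quad_sub {n : ℕ} (M : Matrix (Fin n) (Fin n) ℝ) (x y : Fin n → ℝ) :
    (x - y) ⬝ᵥ M *ᵥ (x - y)
      = x ⬝ᵥ M *ᵥ x - x ⬝ᵥ M *ᵥ y - y ⬝ᵥ M *ᵥ x + y ⬝ᵥ M *ᵥ y := by
  simp [mulVec_sub, dotProduct_sub, sub_dotProduct]; ring

private lemma quad_smul {n : ℕ} (M : Matrix (Fin n) (Fin n) ℝ) (c d : ℝ) (x y : Fin n → ℝ) :
    (c • x) ⬝ᵥ M *ᵥ (d • y) = c * d * (x ⬝ᵥ M *ᵥ y) := by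
  simp [mulVec_smul, dotProduct_smul, smul_dotProduct, smul_eq_mul]; ring

/-- Cauchy–Schwarz for a positive definite quadratic form. -/
private lemma cs_posdef {n : ℕ} {M : Matrix (Fin n) (Fin n) ℝ} (hM : M.PosDef)
    (x y : Fin n → ℝ) :
    x ⬝ᵥ M *ᵥ y ≤ Real.sqrt (x ⬝ᵥ M *ᵥ x) * Real.sqrt (y ⬝ᵥ M *ᵥ y) := by
  have hMt : Mᵀ = M := by
    have := hM.isHermitian.eq
    rwa [conjTranspose_eq_transpose_of_trivial] at this
  have hnn : ∀ z : Fin n → ℝ, 0 ≤ z ⬝ᵥ M *ᵥ z := by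
    intro z
    simpa using hM.posSemidef.dotProduct_mulVec_nonneg z
  have key : (x ⬝ᵥ M *ᵥ y) ^ 2 ≤ (x ⬝ᵥ M *ᵥ x) * (y ⬝ᵥ M *ᵥ y) := by
    by_cases hy : y = 0
    · simp [hy]
    · have hypos : 0 < y ⬝ᵥ M *ᵥ y := by simpa using hM.dotProduct_mulVec_pos hy
      have h := hnn ((y ⬝ᵥ M *ᵥ y) • x + (-(x ⬝ᵥ M *ᵥ y)) • y)
      rw [quad_add, quad_smul, quad_smul, quad_smul, quad_smul, symmdot hMt y x] at h
      nlinarith [h, hypos]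
  calc x ⬝ᵥ M *ᵥ y ≤ |x ⬝ᵥ M *ᵥ y| := le_abs_self _
    _ = Real.sqrt ((x ⬝ᵥ M *ᵥ y) ^ 2) := (Real.sqrt_sq_eq_abs _).symm
    _ ≤ Real.sqrt ((x ⬝ᵥ M *ᵥ x) * (y ⬝ᵥ M *ᵥ y)) := Real.sqrt_le_sqrt key
    _ = Real.sqrt (x ⬝ᵥ M *ᵥ x) * Real.sqrt (y ⬝ᵥ M *ᵥ y) :=
        Real.sqrt_mul (hnn x) _

theorem stmt6 (n : ℕ) (g g' : Matrix (Fin n) (Fin n) ℝ)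
    (hg : g.PosDef) (hg' : g'.PosDef)
    (δ : ℝ) (hδ0 : 0 ≤ δ) (hδ1 : δ < 1)
    (hlow : ∀ v : Fin n → ℝ, (1 - δ) * (v ⬝ᵥ (g *ᵥ v)) ≤ v ⬝ᵥ (g' *ᵥ v))
    (hhigh : ∀ v : Fin n → ℝ, v ⬝ᵥ (g' *ᵥ v) ≤ (1 + δ) * (v ⬝ᵥ (g *ᵥ v)))
    (p : Fin n → ℝ) :
    Real.sqrt (((g⁻¹ - g'⁻¹) *ᵥ p) ⬝ᵥ (g *ᵥ ((g⁻¹ - g'⁻¹) *ᵥ p))) ≤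
      δ / (1 - δ) * Real.sqrt (p ⬝ᵥ (g⁻¹ *ᵥ p)) := by
  have h1δ : (0:ℝ) < 1 - δ := by linarith
  have hgt : gᵀ = g := by
    have := hg.isHermitian.eq; rwa [conjTranspose_eq_transpose_of_trivial] at this
  have hg't : g'ᵀ = g' := by
    have := hg'.isHermitian.eq; rwa [conjTranspose_eq_transpose_of_trivial] at this
  have hSt : (g' - g)ᵀ = g' - g := by rw [transpose_sub, hgt, hg't]
  have hgnn : ∀ z : Fin n → ℝ, 0 ≤ z ⬝ᵥ g *ᵥ z := fun z => by simpa using hg.posSemidef.dotProduct_mulVec_nonneg z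
  -- S-bounds
  set S := g' - g with hS
  have hSquad : ∀ z : Fin n → ℝ, z ⬝ᵥ S *ᵥ z = z ⬝ᵥ g' *ᵥ z - z ⬝ᵥ g *ᵥ z := fun z => by
    simp [hS, sub_mulVec, dotProduct_sub]
  have hSup : ∀ z : Fin n → ℝ, z ⬝ᵥ S *ᵥ z ≤ δ * (z ⬝ᵥ g *ᵥ z) := fun z => by
    have := hhigh z; rw [hSquad]; linarith
  have hSlow : ∀ z : Fin n → ℝ, -(δ * (z ⬝ᵥ g *ᵥ z)) ≤ z ⬝ᵥ S *ᵥ z := fun z => by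
    have := hlow z; rw [hSquad]; linarith
  -- Cauchy–Schwarz-type bound for S
  have hScs : ∀ x y : Fin n → ℝ,
      x ⬝ᵥ S *ᵥ y ≤ δ * (Real.sqrt (x ⬝ᵥ g *ᵥ x) * Real.sqrt (y ⬝ᵥ g *ᵥ y)) := by
    intro x y
    by_cases hx : x = 0
    · simp [hx, mul_nonneg hδ0 (mul_nonneg (Real.sqrt_nonneg _) (Real.sqrt_nonneg _))]
    by_cases hy : y = 0
    · simp [hy, mul_nonneg hδ0 (mul_nonneg (Real.sqrt_nonneg _) (Real.sqrt_nonneg _))]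
    have hxp : 0 < x ⬝ᵥ g *ᵥ x := by simpa using hg.dotProduct_mulVec_pos hx
    have hyp : 0 < y ⬝ᵥ g *ᵥ y := by simpa using hg.dotProduct_mulVec_pos hy
    set a := Real.sqrt (x ⬝ᵥ g *ᵥ x) with ha
    set b := Real.sqrt (y ⬝ᵥ g *ᵥ y) with hb
    have hap : 0 < a := Real.sqrt_pos.mpr hxp
    have hbp : 0 < b := Real.sqrt_pos.mpr hyp
    have ha2 : a ^ 2 = x ⬝ᵥ g *ᵥ x := Real.sq_sqrt hxp.le
    have hb2 : b ^ 2 = y ⬝ᵥ g *ᵥ y := Real.sq_sqrt hyp.le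
    set c := Real.sqrt (b / a) with hc
    have hcp : 0 < c := Real.sqrt_pos.mpr (div_pos hbp hap)
    have hc2 : c ^ 2 = b / a := Real.sq_sqrt (div_pos hbp hap).le
    set x' := c • x with hx'
    set y' := c⁻¹ • y with hy'
    have hxy' : x' ⬝ᵥ S *ᵥ y' = x ⬝ᵥ S *ᵥ y := by
      rw [hx', hy', quad_smul, mul_inv_cancel₀ hcp.ne', one_mul]
    have hpol : 4 * (x' ⬝ᵥ S *ᵥ y')
        = (x' + y') ⬝ᵥ S *ᵥ (x' + y') - (x' - y') ⬝ᵥ S *ᵥ (x' - y') := by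
      rw [quad_add, quad_sub, symmdot hSt y' x']; ring
    have h1 := hSup (x' + y')
    have h2 := hSlow (x' - y')
    have hpar : (x' + y') ⬝ᵥ g *ᵥ (x' + y') + (x' - y') ⬝ᵥ g *ᵥ (x' - y')
        = 2 * (x' ⬝ᵥ g *ᵥ x') + 2 * (y' ⬝ᵥ g *ᵥ y') := by
      rw [quad_add, quad_sub]; ring
    have hx'g : x' ⬝ᵥ g *ᵥ x' = c ^ 2 * (x ⬝ᵥ g *ᵥ x) := by
      rw [hx', quad_smul]; ring
    have hy'g : y' ⬝ᵥ g *ᵥ y' = (c ^ 2)⁻¹ * (y ⬝ᵥ g *ᵥ y) := by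
      rw [hy', quad_smul]; ring
    have hxv : c ^ 2 * (x ⬝ᵥ g *ᵥ x) = a * b := by
      rw [hc2, ← ha2]; field_simp
    have hyv : (c ^ 2)⁻¹ * (y ⬝ᵥ g *ᵥ y) = a * b := by
      rw [hc2, ← hb2]; field_simp
    have : 4 * (x ⬝ᵥ S *ᵥ y) ≤ δ * (4 * (a * b)) := by
      rw [← hxy', hpol]
      have := hSup (x' + y')
      have := hSlow (x' - y')
      nlinarith [hpar, hx'g, hy'g, hxv, hyv]
    linarith
  -- invertibility facts
  have hgdet : IsUnit g.det := isUnit_iff_ne_zero.mpr hg.det_pos.ne'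
  have hg'det : IsUnit g'.det := isUnit_iff_ne_zero.mpr hg'.det_pos.ne'
  set v := (g⁻¹ - g'⁻¹) *ᵥ p with hv
  set q := g'⁻¹ *ᵥ p with hq
  set r := g⁻¹ *ᵥ p with hr
  -- key identity : g *ᵥ v = S *ᵥ q
  have hkey : g *ᵥ v = S *ᵥ q := by
    rw [hv, hq, mulVec_mulVec, mulVec_mulVec, Matrix.mul_sub,
      Matrix.mul_nonsing_inv g hgdet, hS, Matrix.sub_mul,
      Matrix.mul_nonsing_inv g' hg'det]
  have hgr : g *ᵥ r = p := by
    rw [hr, mulVec_mulVec, Matrix.mul_nonsing_inv g hgdet, one_mulVec]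
  -- abbreviations
  set A := Real.sqrt (v ⬝ᵥ g *ᵥ v) with hA
  set B := Real.sqrt (q ⬝ᵥ g *ᵥ q) with hB
  set P := Real.sqrt (p ⬝ᵥ g⁻¹ *ᵥ p) with hP
  have hPr : P = Real.sqrt (r ⬝ᵥ g *ᵥ r) := by
    rw [hP, hgr, dotProduct_comm]
  have hAnn : 0 ≤ A := Real.sqrt_nonneg _
  have hBnn : 0 ≤ B := Real.sqrt_nonneg _
  have hPnn : 0 ≤ P := Real.sqrt_nonneg _
  have hA2 : A ^ 2 = v ⬝ᵥ g *ᵥ v := Real.sq_sqrt (hgnn v)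
  have hB2 : B ^ 2 = q ⬝ᵥ g *ᵥ q := Real.sq_sqrt (hgnn q)
  -- Step: B ≤ P / (1 - δ)
  have hBP : (1 - δ) * B ^ 2 ≤ B * P := by
    have h1 : (1 - δ) * (q ⬝ᵥ g *ᵥ q) ≤ q ⬝ᵥ g' *ᵥ q := hlow q
    have h2 : q ⬝ᵥ g' *ᵥ q = q ⬝ᵥ p := by
      rw [hq, mulVec_mulVec, Matrix.mul_nonsing_inv g' hg'det, one_mulVec]
    have h3 : q ⬝ᵥ p = q ⬝ᵥ g *ᵥ r := by rw [hgr]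
    have h4 : q ⬝ᵥ g *ᵥ r ≤ B * Real.sqrt (r ⬝ᵥ g *ᵥ r) := cs_posdef hg q r
    rw [hB2]
    calc (1 - δ) * (q ⬝ᵥ g *ᵥ q) ≤ q ⬝ᵥ g' *ᵥ q := h1
      _ = q ⬝ᵥ g *ᵥ r := by rw [h2, h3]
      _ ≤ B * P := by rw [hPr]; exact h4
  have hBle : B ≤ P / (1 - δ) := by
    rcases eq_or_lt_of_le hBnn with hB0 | hB0
    · rw [← hB0]; positivity
    · rw [le_div_iff₀ h1δ]
      have := hBP
      nlinarith
  -- Step: A² ≤ δ A B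
  have hAB : A ^ 2 ≤ δ * (A * B) := by
    rw [hA2]
    calc v ⬝ᵥ g *ᵥ v = v ⬝ᵥ S *ᵥ q := by rw [hkey]
      _ ≤ δ * (A * B) := hScs v q
  -- conclude
  show A ≤ δ / (1 - δ) * P
  rcases eq_or_lt_of_le hAnn with hA0 | hA0
  · rw [← hA0]; positivity
  · have hAleB : A ≤ δ * B := by nlinarith
    calc A ≤ δ * B := hAleB
      _ ≤ δ * (P / (1 - δ)) := by
          exact mul_le_mul_of_nonneg_left hBle hδ0
      _ = δ / (1 - δ) * P := by ring
end

section
/- Let $g$ be a positive definite $n\times n$ matrix, and let $H_2(x,v) = \frac{1}{2}v^\top g^{-1} v$ (with $g = g(x)$ depending on $x$). Then $\|\partial H_2/\partial v\|_g = \|g^{-1}v\|_g = \|v\|_{g^{-1}}$, and if additionally $g(x)=\nabla^2\phi(x)$ for a self-concordant $\phi$, then $\|\partial H_2/\partial x\|_{g^{-1}} = \|\tfrac12 Dg[g^{-1}v, g^{-1}v]\|_{g^{-1}} \le \|v\|_{g^{-1}}^2$. -/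
set_option maxHeartbeats 1000000

open Matrix

lemma core2d (p q r s : ℝ)
    (h : ∀ a b : ℝ, a^2 + b^2 = 1 → |p*a^3 + 3*q*a^2*b + 3*r*a*b^2 + s*b^3| ≤ 2) :
    p^2 + q^2 ≤ 4 := by
  rcases eq_or_lt_of_le (by positivity : (0:ℝ) ≤ p^2 + q^2) with h0 | h0
  · linarith
  set ρ := Real.sqrt (p^2+q^2) with hρdef
  have hρpos : 0 < ρ := Real.sqrt_pos.2 h0
  have hρ2 : ρ^2 = p^2+q^2 := Real.sq_sqrt (by positivity)
  -- find angle θ with cos θ = p/ρ, sin θ = q/ρ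
  have hz : (⟨p/ρ, q/ρ⟩ : ℂ) ≠ 0 := by
    intro hzz
    have h1 : p/ρ = 0 := congrArg Complex.re hzz
    have h2 : q/ρ = 0 := congrArg Complex.im hzz
    have hp : p = 0 := by
      rcases div_eq_zero_iff.1 h1 with h | h
      · exact h
      · exact absurd h hρpos.ne'
    have hq : q = 0 := by
      rcases div_eq_zero_iff.1 h2 with h | h
      · exact h
      · exact absurd h hρpos.ne'
    rw [hp, hq] at h0; norm_num at h0
  have habs : ‖(⟨p/ρ, q/ρ⟩ : ℂ)‖ = 1 := by
    rw [Complex.norm_def, Complex.normSq_mk]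
    rw [show p/ρ*(p/ρ) + q/ρ*(q/ρ) = (p^2+q^2)/ρ^2 by field_simp]
    rw [hρ2]
    simp [div_self (by positivity : (p^2+q^2) ≠ 0)]
  set θ := Complex.arg ⟨p/ρ, q/ρ⟩ with hθ
  have hcosθ : Real.cos θ = p/ρ := by
    rw [hθ, Complex.cos_arg hz, habs]; simp
  have hsinθ : Real.sin θ = q/ρ := by
    rw [hθ, Complex.sin_arg, habs]; simp
  set c := Real.cos (θ/3) with hc
  set s' := Real.sin (θ/3) with hs'
  have hcs : c^2 + s'^2 = 1 := by
    rw [hc, hs']; rw [← Real.sin_sq_add_cos_sq (θ/3)]; ring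
  have hcos3 : 4*c^3 - 3*c = p/ρ := by
    rw [← hcosθ, show θ = 3*(θ/3) by ring, Real.cos_three_mul]
  have hsin3 : 3*s' - 4*s'^3 = q/ρ := by
    rw [← hsinθ, show θ = 3*(θ/3) by ring, Real.sin_three_mul]
  set K := Real.sqrt 3 with hKdef
  have hK : K^2 = 3 := Real.sq_sqrt (by norm_num)
  -- three test points
  have hF0 := h c s' hcs
  have hF1 := h (c/2 - K/2*s') (s'/2 + K/2*c) (by linear_combination ((s'^2+c^2)/4) * hK + hcs)
  have hF2 := h (-c/2 - K/2*s') (-s'/2 + K/2*c) (by linear_combination ((s'^2+c^2)/4) * hK + hcs)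
  set μ0 := (1 + 2*(c^2 - s'^2))/3 with hμ0
  set μ1 := (1 - (c^2 - s'^2) - 2*K*c*s')/3 with hμ1
  set μ2 := (1 - (c^2 - s'^2) + 2*K*c*s')/3 with hμ2
  have hmusum : μ0^2 + μ1^2 + μ2^2 = 1 := by
    rw [hμ0, hμ1, hμ2]
    linear_combination (8/9*c^2*s'^2) * hK + (2/3 + 2/3*s'^2 + 2/3*c^2) * hcs
  have hmaster : μ0^2 * (p*c^3 + 3*q*c^2*s' + 3*r*c*s'^2 + s*s'^3)
      - μ1^2 * (p*(c/2 - K/2*s')^3 + 3*q*(c/2 - K/2*s')^2*(s'/2 + K/2*c)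
          + 3*r*(c/2 - K/2*s')*(s'/2 + K/2*c)^2 + s*(s'/2 + K/2*c)^3)
      + μ2^2 * (p*(-c/2 - K/2*s')^3 + 3*q*(-c/2 - K/2*s')^2*(-s'/2 + K/2*c)
          + 3*r*(-c/2 - K/2*s')*(-s'/2 + K/2*c)^2 + s*(-s'/2 + K/2*c)^3)
      = p*(4*c^3-3*c) + q*(3*s'-4*s'^3) := by
    rw [hμ0, hμ1, hμ2]
    linear_combination
      ((-1/12)*s'^3*q + (-1/6)*s'^5*q + (-1/12)*s'^7*q + (1/6)*c*s'^2*r + (-1/12)*c*s'^2*p + (-1/2)*c*s'^4*p + (-1/9)*c*s'^4*K^2*p + (-1/6)*c*s'^6*r + (-5/12)*c*s'^6*p + (-1/9)*c*s'^6*K^2*p + (-1/12)*c^2*s'*s + (1/6)*c^2*s'*q + (1/6)*c^2*s'^3*s + (5/6)*c^2*s'^3*q + (1/3)*c^2*s'^3*K^2*q + (5/36)*c^2*s'^5*s + (-1/3)*c^2*s'^5*q + (-1/12)*c^3*r + (-5/6)*c^3*s'^2*r + (-1/6)*c^3*s'^2*p + (-1/3)*c^3*s'^2*K^2*r + (5/4)*c^3*s'^4*r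 + (-5/6)*c^3*s'^4*p + (1/3)*c^3*s'^4*K^2*r + (-2/9)*c^3*s'^4*K^2*p + (1/2)*c^4*s'*s + (1/9)*c^4*s'*K^2*s + (-5/6)*c^4*s'^3*s + (5/4)*c^4*s'^3*q + (-2/9)*c^4*s'^3*K^2*s + (1/3)*c^4*s'^3*K^2*q + (1/6)*c^5*r + (-1/3)*c^5*s'^2*r + (5/36)*c^5*s'^2*p + (-5/12)*c^6*s'*s + (-1/6)*c^6*s'*q + (-1/9)*c^6*s'*K^2*s + (-1/12)*c^7*r) * hK
      + (3*s'*q + (-1/12)*s'^3*s + (-3/4)*s'^3*q + (5/12)*s'^5*s + (-1/4)*s'^5*q + (-3)*c*p + (-3/4)*c*s'^2*r + (-11/4)*c*s'^2*p + (3/4)*c*s'^4*r + (-5/4)*c*s'^4*p + (1/4)*c^2*s'*s + (9/4)*c^2*s'*q + (-5/6)*c^2*s'^3*s + (1/2)*c^2*s'^3*q + (1/4)*c^3*r + (11/12)*c^3*p + (1/2)*c^3*s'^2*r + (-5/6)*c^3*s'^2*p + (-5/4)*c^4*s'*s + (3/4)*c^4*s'*q + (-1/4)*c^5*r + (5/12)*c^5*p)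 * hcs
  -- conclude ρ ≤ 2
  have hρval : p*(4*c^3-3*c) + q*(3*s'-4*s'^3) = ρ := by
    rw [hcos3, hsin3]
    have hρne : ρ ≠ 0 := hρpos.ne'
    field_simp
    linarith [hρ2]
  set F0 := p*c^3 + 3*q*c^2*s' + 3*r*c*s'^2 + s*s'^3 with hF0def
  set F1 := p*(c/2 - K/2*s')^3 + 3*q*(c/2 - K/2*s')^2*(s'/2 + K/2*c)
          + 3*r*(c/2 - K/2*s')*(s'/2 + K/2*c)^2 + s*(s'/2 + K/2*c)^3 with hF1def
  set F2 := p*(-c/2 - K/2*s')^3 + 3*q*(-c/2 - K/2*s')^2*(-s'/2 + K/2*c)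
          + 3*r*(-c/2 - K/2*s')*(-s'/2 + K/2*c)^2 + s*(-s'/2 + K/2*c)^3 with hF2def
  have habs0 := abs_le.1 hF0
  have habs1 := abs_le.1 hF1
  have habs2 := abs_le.1 hF2
  have t0 : μ0^2 * F0 ≤ μ0^2 * 2 := mul_le_mul_of_nonneg_left habs0.2 (sq_nonneg μ0)
  have t1 : -(μ1^2 * F1) ≤ μ1^2 * 2 := by
    have h1 : -(μ1^2 * F1) = μ1^2 * (-F1) := by ring
    rw [h1]
    exact mul_le_mul_of_nonneg_left (by linarith [habs1.1]) (sq_nonneg μ1)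
  have t2 : μ2^2 * F2 ≤ μ2^2 * 2 := mul_le_mul_of_nonneg_left habs2.2 (sq_nonneg μ2)
  have hρle : ρ ≤ 2 := by
    have hsum : μ0^2 * F0 - μ1^2 * F1 + μ2^2 * F2 ≤ (μ0^2 + μ1^2 + μ2^2) * 2 := by
      linarith
    rw [hmusum] at hsum
    linarith [hmaster, hρval, hsum]
  have : p^2 + q^2 = ρ^2 := hρ2.symm
  rw [this]
  calc ρ^2 ≤ 2^2 := pow_le_pow_left₀ hρpos.le hρle 2
    _ = 4 := by norm_num

lemma key_bound {n : ℕ}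
    (C2 : (Fin n → ℝ) →L[ℝ] (Fin n → ℝ) →L[ℝ] ℝ)
    (C3 : (Fin n → ℝ) →L[ℝ] (Fin n → ℝ) →L[ℝ] (Fin n → ℝ) →L[ℝ] ℝ)
    (hC2sym : ∀ a b, C2 a b = C2 b a)
    (hC2pos : ∀ h, h ≠ 0 → 0 < C2 h h)
    (hsym_ab : ∀ a b c, C3 a b c = C3 b a c)
    (hsym_bc : ∀ a b c, C3 a b c = C3 a c b)
    (hbound : ∀ h, |C3 h h h| ≤ 2 * (C2 h h) ^ ((3:ℝ)/2))
    (u c : Fin n → ℝ) :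
    |C3 u u c| ≤ 2 * C2 u u * Real.sqrt (C2 c c) := by
  have hC2nn : ∀ h, 0 ≤ C2 h h := by
    intro h
    rcases eq_or_ne h 0 with rfl | hne
    · simp
    · exact (hC2pos h hne).le
  rcases eq_or_ne u 0 with rfl | hu
  · simp
  rcases eq_or_ne c 0 with rfl | hc
  · simp [Real.sqrt_zero]
  set α := Real.sqrt (C2 u u) with hαdef
  set β := Real.sqrt (C2 c c) with hβdef
  have hαpos : 0 < α := Real.sqrt_pos.2 (hC2pos u hu)
  have hβpos : 0 < β := Real.sqrt_pos.2 (hC2pos c hc)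
  have hα2 : α^2 = C2 u u := Real.sq_sqrt (hC2nn u)
  have hβ2 : β^2 = C2 c c := Real.sq_sqrt (hC2nn c)
  set uh := α⁻¹ • u with huhdef
  set ch := β⁻¹ • c with hchdef
  have huhuh : C2 uh uh = 1 := by
    rw [huhdef]
    simp only [_root_.map_smul, ContinuousLinearMap.smul_apply, smul_eq_mul]
    rw [← hα2]; field_simp
  have hchch : C2 ch ch = 1 := by
    rw [hchdef]
    simp only [_root_.map_smul, ContinuousLinearMap.smul_apply, smul_eq_mul]
    rw [← hβ2]; field_simp
  have hmain : |C3 uh uh ch| ≤ 2 := by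
    set ρ := C2 uh ch with hρdef
    set e' := ch - ρ • uh with he'def
    have huhe' : C2 uh e' = 0 := by
      rw [he'def]
      simp only [_root_.map_sub, _root_.map_smul, ContinuousLinearMap.coe_sub', Pi.sub_apply,
        ContinuousLinearMap.smul_apply, smul_eq_mul]
      rw [huhuh]; ring
    have he'e' : C2 e' e' = 1 - ρ^2 := by
      rw [he'def]
      simp only [_root_.map_sub, _root_.map_smul, ContinuousLinearMap.coe_sub', Pi.sub_apply,
        ContinuousLinearMap.smul_apply, smul_eq_mul]
      rw [huhuh, hchch, hC2sym ch uh]; ring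
    rcases eq_or_ne e' 0 with he0 | hene
    · -- c-hat is ±u-hat
      have hcheq : ch = ρ • uh := by rwa [he'def, sub_eq_zero] at he0
      have hρ1 : ρ^2 = 1 := by
        have := hchch
        rw [hcheq] at this
        simp only [_root_.map_smul, ContinuousLinearMap.smul_apply, smul_eq_mul] at this
        rw [huhuh] at this; nlinarith [this]
      have hbu := hbound uh
      rw [huhuh, Real.one_rpow, mul_one] at hbu
      rw [hcheq]
      simp only [_root_.map_smul, ContinuousLinearMap.smul_apply, smul_eq_mul]
      rw [abs_mul]
      have : |ρ| = 1 := by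
        rw [← Real.sqrt_one, ← hρ1, Real.sqrt_sq_eq_abs]
      rw [this, one_mul]; exact hbu
    · have he'pos : 0 < C2 e' e' := hC2pos e' hene
      have hρ2lt : ρ^2 < 1 := by rw [he'e'] at he'pos; linarith
      set τ := Real.sqrt (1 - ρ^2) with hτdef
      have hτpos : 0 < τ := Real.sqrt_pos.2 (by linarith)
      have hτ2 : τ^2 = 1 - ρ^2 := Real.sq_sqrt (by linarith)
      set e := τ⁻¹ • e' with hedef
      have hee : C2 e e = 1 := by
        rw [hedef]
        simp only [_root_.map_smul, ContinuousLinearMap.smul_apply, smul_eq_mul]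
        rw [he'e', ← hτ2]; field_simp
      have huhe : C2 uh e = 0 := by
        rw [hedef]
        simp only [_root_.map_smul, ContinuousLinearMap.smul_apply, smul_eq_mul]
        rw [huhe']; ring
      have heuh : C2 e uh = 0 := by rw [← hC2sym]; exact huhe
      set p := C3 uh uh uh with hp
      set q := C3 uh uh e with hq
      set r := C3 uh e e with hr
      set s := C3 e e e with hs
      have h2d : ∀ a b : ℝ, a^2 + b^2 = 1 →
          |p*a^3 + 3*q*a^2*b + 3*r*a*b^2 + s*b^3| ≤ 2 := by
        intro a b hab
        set h := a • uh + b • e with hh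
        have hC2h : C2 h h = 1 := by
          rw [hh]
          simp only [_root_.map_add, _root_.map_smul, ContinuousLinearMap.add_apply,
            ContinuousLinearMap.smul_apply, smul_eq_mul]
          rw [huhuh, hee, huhe, heuh]
          linarith [hab]
        have hC3h : C3 h h h = p*a^3 + 3*q*a^2*b + 3*r*a*b^2 + s*b^3 := by
          rw [hh]
          simp only [_root_.map_add, _root_.map_smul, ContinuousLinearMap.add_apply,
            ContinuousLinearMap.smul_apply, smul_eq_mul]
          have e1 : C3 uh e uh = C3 uh uh e := hsym_bc uh e uh
          have e2 : C3 e uh uh = C3 uh e uh := hsym_ab e uh uh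
          have e3 : C3 e uh e = C3 uh e e := hsym_ab e uh e
          have e4 : C3 e e uh = C3 e uh e := hsym_bc e e uh
          rw [e1, e2, e1, e3, e4, e3]
          ring
        have := hbound h
        rw [hC2h, Real.one_rpow, mul_one, hC3h] at this
        exact this
      have hpq := core2d p q r s h2d
      have hche : ch = ρ • uh + τ • e := by
        rw [hedef, smul_inv_smul₀ hτpos.ne']
        rw [he'def]; abel
      have hval : C3 uh uh ch = ρ * p + τ * q := by
        rw [hche]
        simp only [_root_.map_add, _root_.map_smul, ContinuousLinearMap.add_apply,
          ContinuousLinearMap.smul_apply, smul_eq_mul]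
        rfl
      have hsq : (ρ * p + τ * q)^2 ≤ 4 := by
        nlinarith [sq_nonneg (ρ*q - τ*p), hτ2, hpq, sq_nonneg ρ, sq_nonneg τ]
      rw [hval]
      rw [abs_le]
      constructor
      · nlinarith [hsq, sq_nonneg (ρ*p + τ*q + 2)]
      · nlinarith [hsq, sq_nonneg (ρ*p + τ*q - 2)]
  have huu : u = α • uh := by rw [huhdef, smul_inv_smul₀ hαpos.ne']
  have hcc : c = β • ch := by rw [hchdef, smul_inv_smul₀ hβpos.ne']
  calc |C3 u u c| = α * α * β * |C3 uh uh ch| := by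
        conv_lhs => rw [huu, hcc]
        simp only [_root_.map_smul, ContinuousLinearMap.smul_apply, smul_eq_mul]
        rw [abs_mul, abs_mul, abs_mul, abs_of_pos hαpos, abs_of_pos hβpos]
        ring
    _ ≤ α * α * β * 2 := by
        apply mul_le_mul_of_nonneg_left hmain
        positivity
    _ = 2 * C2 u u * β := by rw [← hα2]; ring

-- expansion lemmas
lemma single_expand {n : ℕ} (h : Fin n → ℝ) :
    h = ∑ i, (h i) • (Pi.single i 1 : Fin n → ℝ) := by
  funext j
  rw [Finset.sum_apply]
  rw [Finset.sum_eq_single j]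
  · simp
  · intro i _ hij
    simp [Pi.single_apply, hij]
  · simp

theorem stmt8 (n : ℕ) (M : Set (Fin n → ℝ)) (hM : IsOpen M) (hMconv : Convex ℝ M)
    (φ : (Fin n → ℝ) → ℝ) (hφ : ContDiffOn ℝ 3 φ M)
    (g : (Fin n → ℝ) → Matrix (Fin n) (Fin n) ℝ)
    (hg : ∀ x i j, g x i j =
      iteratedFDerivWithin ℝ 2 φ M x ![Pi.single i 1, Pi.single j 1])
    (hgpos : ∀ x ∈ M, (g x).PosDef)
    (hsc : ∀ x ∈ M, ∀ h : Fin n → ℝ,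
      |iteratedFDerivWithin ℝ 3 φ M x ![h, h, h]| ≤
        2 * iteratedFDerivWithin ℝ 2 φ M x ![h, h] ^ ((3 : ℝ) / 2))
    (x : Fin n → ℝ) (hx : x ∈ M) (v : Fin n → ℝ)
    (w : Fin n → ℝ)
    (hw : ∀ i, w i = (1 / 2) *
      iteratedFDerivWithin ℝ 3 φ M x ![(g x)⁻¹ *ᵥ v, (g x)⁻¹ *ᵥ v, Pi.single i 1]) :
    Real.sqrt (((g x)⁻¹ *ᵥ v) ⬝ᵥ (g x *ᵥ ((g x)⁻¹ *ᵥ v))) =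
        Real.sqrt (v ⬝ᵥ ((g x)⁻¹ *ᵥ v)) ∧
      Real.sqrt (w ⬝ᵥ ((g x)⁻¹ *ᵥ w)) ≤ Real.sqrt (v ⬝ᵥ ((g x)⁻¹ *ᵥ v)) ^ 2 := by
  have hpd := hgpos x hx
  have hdet : IsUnit (g x).det := isUnit_iff_ne_zero.2 hpd.det_pos.ne'
  have hginv : ∀ z : Fin n → ℝ, g x *ᵥ ((g x)⁻¹ *ᵥ z) = z := by
    intro z
    rw [Matrix.mulVec_mulVec, Matrix.mul_nonsing_inv _ hdet, Matrix.one_mulVec]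
  have hposdot : ∀ h : Fin n → ℝ, h ≠ 0 → 0 < h ⬝ᵥ (g x *ᵥ h) := by
    intro h hne
    have := hpd.dotProduct_mulVec_pos hne
    simpa using this
  constructor
  · rw [hginv v, dotProduct_comm]
  -- calculus setup
  have hxnhds : M ∈ nhds x := hM.mem_nhds hx
  have hφat : ContDiffAt ℝ 3 φ x := (hφ x hx).contDiffAt hxnhds
  set C2 : (Fin n → ℝ) →L[ℝ] (Fin n → ℝ) →L[ℝ] ℝ := fderiv ℝ (fderiv ℝ φ) x with hC2def
  set C3 : (Fin n → ℝ) →L[ℝ] (Fin n → ℝ) →L[ℝ] (Fin n → ℝ) →L[ℝ] ℝ :=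
    fderiv ℝ (fderiv ℝ (fderiv ℝ φ)) x with hC3def
  have hiFD2 : ∀ a b : Fin n → ℝ, iteratedFDerivWithin ℝ 2 φ M x ![a, b] = C2 a b := by
    intro a b
    rw [iteratedFDerivWithin_of_isOpen 2 hM hx, iteratedFDeriv_two_apply]
    simp
    rfl
  have hinit : ∀ a b c : Fin n → ℝ, Fin.init ![a, b, c] = ![a, b] := by
    intro a b c
    funext i
    fin_cases i <;> simp [Fin.init]
  have hiFD3 : ∀ a b c : Fin n → ℝ, iteratedFDerivWithin ℝ 3 φ M x ![a, b, c] = C3 a b c := by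
    intro a b c
    rw [iteratedFDerivWithin_of_isOpen 3 hM hx, iteratedFDeriv_succ_apply_right, hinit,
      iteratedFDeriv_two_apply]
    simp [Fin.last]
    rfl
  -- dot products vs C2
  have hdot : ∀ h k : Fin n → ℝ, h ⬝ᵥ (g x *ᵥ k) = C2 h k := by
    intro h k
    have expand2 : ∀ k', C2 h k' = ∑ i, h i * C2 (Pi.single i 1) k' := by
      intro k'
      conv_lhs => rw [single_expand h]
      rw [_root_.map_sum]
      rw [ContinuousLinearMap.sum_apply]
      exact Finset.sum_congr rfl fun i _ => by
        rw [_root_.map_smul, ContinuousLinearMap.smul_apply, smul_eq_mul]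
    have expand1 : ∀ i, C2 (Pi.single i 1) k = ∑ j, k j * g x i j := by
      intro i
      conv_lhs => rw [single_expand k]
      rw [_root_.map_sum]
      exact Finset.sum_congr rfl fun j _ => by
        rw [_root_.map_smul, smul_eq_mul, hg x i j, hiFD2]
    rw [expand2 k]
    simp only [dotProduct, Matrix.mulVec]
    refine Finset.sum_congr rfl fun i _ => ?_
    rw [expand1 i, Finset.mul_sum, Finset.mul_sum]
    exact Finset.sum_congr rfl fun j _ => by ring
  -- symmetry of C2
  have hC2sym : ∀ a b, C2 a b = C2 b a := hφat.isSymmSndFDerivAt (by norm_num)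
  -- positivity of C2
  have hC2pos : ∀ h, h ≠ 0 → 0 < C2 h h := by
    intro h hne
    rw [← hdot h h]
    exact hposdot h hne
  -- symmetry of C3 in first two arguments
  have hsym_ab : ∀ a b c, C3 a b c = C3 b a c := by
    intro a b c
    have hB : ContDiffAt ℝ 2 (fderiv ℝ φ) x := hφat.fderiv_right (m := 2) (by norm_num)
    have hsy : IsSymmSndFDerivAt ℝ (fderiv ℝ φ) x := hB.isSymmSndFDerivAt (by norm_num)
    rw [hC3def]
    rw [hsy a b]
  -- symmetry of C3 in last two arguments
  have hsym_bc : ∀ a b c, C3 a b c = C3 a c b := by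
    intro a b c
    set A := fderiv ℝ (fderiv ℝ φ) with hAdef
    have hA1 : ContDiffAt ℝ 1 A x :=
      (hφat.fderiv_right (m := 2) (by norm_num)).fderiv_right (m := 1) (by norm_num)
    have hAdiff : DifferentiableAt ℝ A x := hA1.differentiableAt (by norm_num)
    set L : ((Fin n → ℝ) →L[ℝ] (Fin n → ℝ) →L[ℝ] ℝ) →L[ℝ] ℝ :=
      (ContinuousLinearMap.apply ℝ ℝ c).comp
        (ContinuousLinearMap.apply ℝ ((Fin n → ℝ) →L[ℝ] ℝ) b) with hLdef
    set L' : ((Fin n → ℝ) →L[ℝ] (Fin n → ℝ) →L[ℝ] ℝ) →L[ℝ] ℝ :=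
      (ContinuousLinearMap.apply ℝ ℝ b).comp
        (ContinuousLinearMap.apply ℝ ((Fin n → ℝ) →L[ℝ] ℝ) c) with hL'def
    have hfd : fderiv ℝ (⇑L ∘ A) x = L.comp (fderiv ℝ A x) :=
      (L.hasFDerivAt.comp x (f := A) (f' := fderiv ℝ A x) hAdiff.hasFDerivAt).fderiv
    have hfd' : fderiv ℝ (⇑L' ∘ A) x = L'.comp (fderiv ℝ A x) :=
      (L'.hasFDerivAt.comp x (f := A) (f' := fderiv ℝ A x) hAdiff.hasFDerivAt).fderiv
    have heq : (⇑L ∘ A) =ᶠ[nhds x] (⇑L' ∘ A) := by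
      filter_upwards [hxnhds] with y hy
      have hsy : IsSymmSndFDerivAt ℝ φ y :=
        ((hφ y hy).contDiffAt (hM.mem_nhds hy)).isSymmSndFDerivAt (by norm_num)
      simp only [Function.comp_apply, hLdef, hL'def, ContinuousLinearMap.comp_apply,
        ContinuousLinearMap.apply_apply]
      exact hsy b c
    have := heq.fderiv_eq (𝕜 := ℝ)
    rw [hfd, hfd'] at this
    have happ := congrFun (congrArg DFunLike.coe this) a
    simp only [ContinuousLinearMap.comp_apply, ContinuousLinearMap.apply_apply,
      hLdef, hL'def] at happ
    rw [hC3def]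
    exact happ
  -- self-concordance bound
  have hbound : ∀ h, |C3 h h h| ≤ 2 * (C2 h h) ^ ((3:ℝ)/2) := by
    intro h
    have := hsc x hx h
    rwa [hiFD3, hiFD2] at this
  -- main assembly
  set u := (g x)⁻¹ *ᵥ v with hudef
  set cv := (g x)⁻¹ *ᵥ w with hcvdef
  have hNeq : v ⬝ᵥ u = C2 u u := by
    conv_lhs => rw [← hginv v]
    rw [dotProduct_comm, ← hudef, hdot]
  have hWeq : w ⬝ᵥ cv = C2 cv cv := by
    conv_lhs => rw [← hginv w]
    rw [dotProduct_comm, ← hcvdef, hdot]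
  have hC2nn : ∀ h, 0 ≤ C2 h h := by
    intro h
    rcases eq_or_ne h 0 with rfl | hne
    · simp
    · exact (hC2pos h hne).le
  have hhalf : C2 cv cv = (1/2) * C3 u u cv := by
    rw [← hWeq]
    have expand3 : C3 u u cv = ∑ i, cv i * C3 u u (Pi.single i 1) := by
      conv_lhs => rw [single_expand cv]
      rw [_root_.map_sum]
      exact Finset.sum_congr rfl fun i _ => by
        rw [_root_.map_smul, smul_eq_mul]
    rw [expand3, Finset.mul_sum]
    simp only [dotProduct]
    refine Finset.sum_congr rfl fun i _ => ?_
    rw [hw i, hiFD3]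
    ring
  have hkey := key_bound C2 C3 hC2sym hC2pos hsym_ab hsym_bc hbound u cv
  set S := Real.sqrt (C2 cv cv) with hSdef
  have hS2 : S^2 = C2 cv cv := Real.sq_sqrt (hC2nn cv)
  have hSnn : 0 ≤ S := Real.sqrt_nonneg _
  have hSle : S^2 ≤ C2 u u * S := by
    rw [hS2, hhalf]
    have h1 : C3 u u cv ≤ 2 * C2 u u * S := le_trans (le_abs_self _) hkey
    linarith
  have hSN : S ≤ C2 u u := by
    rcases eq_or_lt_of_le hSnn with h0 | h0
    · rw [← h0]; exact hC2nn u
    · have : S * S ≤ C2 u u * S := by nlinarith [hSle]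
      exact le_of_mul_le_mul_right this h0
  -- final
  rw [hWeq]
  rw [hNeq]  -- ??? goal has v ⬝ᵥ ((g x)⁻¹ *ᵥ v) which is v ⬝ᵥ u
  rw [Real.sq_sqrt (hC2nn u)]
  exact hSN
end

section
/- Let $K\subseteq\mathbb{R}^n$ be a convex body, $c\in\mathbb{R}^n$ a unit vector, $T>0$, and let $\pi$ be the probability distribution on $K$ with density proportional to $e^{-c^\top x / T}$. Then $\mathbb{E}_{x\sim\pi}[c^\top x] \le nT + \min_{x\in K} c^\top x$. -/
open MeasureTheory
open scoped RealInnerProductSpace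
set_option maxHeartbeats 1000000

lemma aux_deriv_nonneg' {f : ℝ → ℝ} {x d : ℝ}
    (hmono : ∀ a b, x ≤ a → a ≤ b → f a ≤ f b) (hd : HasDerivAt f d x) : 0 ≤ d := by
  have h := hasDerivAt_iff_tendsto_slope.1 hd
  have h2 : Filter.Tendsto (slope f x) (nhdsWithin x (Set.Ioi x)) (nhds d) :=
    h.mono_left (nhdsWithin_mono x (fun y hy => ne_of_gt hy))
  refine ge_of_tendsto h2 ?_
  filter_upwards [self_mem_nhdsWithin] with y hy
  have hxy : x < y := hy
  have : 0 ≤ f y - f x := sub_nonneg.2 (hmono x y le_rfl hxy.le)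
  have : 0 ≤ (f y - f x) / (y - x) := div_nonneg this (sub_nonneg.2 hxy.le)
  simpa [slope_def_field, div_eq_inv_mul] using this

lemma aux_mono' (n : ℕ) (K : Set (EuclideanSpace ℝ (Fin n)))
    (hKcomp : IsCompact K) (hKconv : Convex ℝ K)
    (c xs : EuclideanSpace ℝ (Fin n)) (hxs : xs ∈ K)
    {a b : ℝ} (ha : 0 < a) (hab : a ≤ b) :
    a ^ n * Real.exp (a * ⟪c, xs⟫) * ∫ x in K, Real.exp (-a * ⟪c, x⟫) ≤
      b ^ n * Real.exp (b * ⟪c, xs⟫) * ∫ x in K, Real.exp (-b * ⟪c, x⟫) := by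
  have hb : 0 < b := lt_of_lt_of_le ha hab
  set m : ℝ := ⟪c, xs⟫ with hm
  set Za : ℝ := ∫ x in K, Real.exp (-a * ⟪c, x⟫) with hZa
  set Zb : ℝ := ∫ x in K, Real.exp (-b * ⟪c, x⟫) with hZb
  set r : ℝ := a / b with hr
  have hr0 : 0 < r := div_pos ha hb
  have hr1 : r ≤ 1 := (div_le_one hb).2 hab
  have hbr : b * r = a := by rw [hr]; field_simp
  set v : EuclideanSpace ℝ (Fin n) := xs - r • xs with hv
  have hK : MeasurableSet K := hKcomp.measurableSet
  set g : EuclideanSpace ℝ (Fin n) → ℝ :=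
    K.indicator (fun y => Real.exp (-b * ⟪c, y⟫)) with hgdef
  have hinner : Continuous fun y : EuclideanSpace ℝ (Fin n) => ⟪c, y⟫ :=
    Continuous.inner continuous_const continuous_id
  have hgcont : ContinuousOn (fun y : EuclideanSpace ℝ (Fin n) => Real.exp (-b * ⟪c, y⟫)) K :=
    (Real.continuous_exp.comp (continuous_const.mul hinner)).continuousOn
  have hg : Integrable g := by
    rw [hgdef, integrable_indicator_iff hK]
    exact hgcont.integrableOn_compact hKcomp
  have hgnonneg : ∀ y, 0 ≤ g y := fun y =>
    Set.indicator_nonneg (fun z _ => (Real.exp_pos _).le) y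
  have hphi : ∀ x ∈ K, v + r • x ∈ K := by
    intro x hx
    have : v + r • x = r • x + (1 - r) • xs := by
      rw [hv, sub_smul, one_smul]; abel
    rw [this]
    exact hKconv hx hxs hr0.le (by linarith) (by ring)
  have h1 : Integrable (fun x => g (v + r • x)) :=
    (hg.comp_add_left v).comp_smul (ne_of_gt hr0)
  have h2 : ∫ x, g (v + r • x) = (r ^ n)⁻¹ * Zb := by
    have e1 : ∫ x, g (v + r • x) =
        |((r ^ (Module.finrank ℝ (EuclideanSpace ℝ (Fin n))))⁻¹)| • ∫ y, g (v + y) :=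
      Measure.integral_comp_smul volume (fun y => g (v + y)) r
    rw [e1, integral_add_left_eq_self g v, finrank_euclideanSpace_fin,
      abs_of_nonneg (by positivity), smul_eq_mul, hgdef, integral_indicator hK]
  have h3 : ∫ x in K, Real.exp (-b * ⟪c, v + r • x⟫) ≤ ∫ x, g (v + r • x) := by
    have e2 : ∫ x in K, Real.exp (-b * ⟪c, v + r • x⟫) = ∫ x in K, g (v + r • x) := by
      refine setIntegral_congr_fun hK (fun x hx => ?_)
      rw [hgdef, Set.indicator_of_mem (hphi x hx)]
    rw [e2]
    exact setIntegral_le_integral h1 (Filter.Eventually.of_forall (fun x => hgnonneg _))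
  have h4 : ∫ x in K, Real.exp (-b * ⟪c, v + r • x⟫) = Real.exp (-(b - a) * m) * Za := by
    rw [hZa, ← integral_const_mul]
    refine setIntegral_congr_fun hK (fun x hx => ?_)
    have hip : ⟪c, v + r • x⟫ = m - r * m + r * ⟪c, x⟫ := by
      rw [hv, inner_add_right, inner_sub_right, real_inner_smul_right, real_inner_smul_right, hm]
    rw [hip, ← Real.exp_add]
    congr 1
    linear_combination (m - ⟪c, x⟫) * hbr
  have key : Real.exp (-(b - a) * m) * Za ≤ (r ^ n)⁻¹ * Zb := by
    rw [← h4, ← h2]; exact h3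
  have hZbpos : 0 ≤ Zb := setIntegral_nonneg hK (fun x _ => (Real.exp_pos _).le)
  have hexp : Real.exp (a * m) * Real.exp ((b - a) * m) = Real.exp (b * m) := by
    rw [← Real.exp_add]; congr 1; ring
  have hee : Real.exp ((b - a) * m) * Real.exp (-(b - a) * m) = 1 := by
    rw [← Real.exp_add]; rw [show (b-a)*m + -(b-a)*m = 0 by ring]; exact Real.exp_zero
  have hrn : (r ^ n)⁻¹ = b ^ n / a ^ n := by rw [hr, div_pow, inv_div]
  have hmul := mul_le_mul_of_nonneg_left key
    (le_of_lt (by positivity : (0:ℝ) < a ^ n * Real.exp (a * m) * Real.exp ((b - a) * m)))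
  calc a ^ n * Real.exp (a * m) * Za
      = a ^ n * Real.exp (a * m) * (Real.exp ((b - a) * m) * Real.exp (-(b - a) * m)) * Za := by
        rw [hee, mul_one]
    _ = a ^ n * Real.exp (a * m) * Real.exp ((b - a) * m) * (Real.exp (-(b - a) * m) * Za) := by
        ring
    _ ≤ a ^ n * Real.exp (a * m) * Real.exp ((b - a) * m) * ((r ^ n)⁻¹ * Zb) := hmul
    _ = (Real.exp (a * m) * Real.exp ((b - a) * m)) * ((a ^ n * (b ^ n / a ^ n)) * Zb) := by
        rw [hrn]; ring
    _ = b ^ n * Real.exp (b * m) * Zb := by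
        rw [hexp, mul_div_cancel₀ _ (by positivity : (a:ℝ) ^ n ≠ 0)]
        ring

lemma aux_deriv' (n : ℕ) (K : Set (EuclideanSpace ℝ (Fin n)))
    (hKcomp : IsCompact K) (c : EuclideanSpace ℝ (Fin n)) (hc : ‖c‖ = 1)
    {l : ℝ} :
    HasDerivAt (fun t => ∫ x in K, Real.exp (-t * ⟪c, x⟫))
      (∫ x in K, -⟪c, x⟫ * Real.exp (-l * ⟪c, x⟫)) l := by
  obtain ⟨R, hR0, hRK⟩ := hKcomp.isBounded.subset_closedBall_lt 0 0
  have hK : MeasurableSet K := hKcomp.measurableSet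
  have hinner : Continuous fun y : EuclideanSpace ℝ (Fin n) => ⟪c, y⟫ :=
    Continuous.inner continuous_const continuous_id
  have hbound_inner : ∀ x ∈ K, |⟪c, x⟫| ≤ R := by
    intro x hx
    calc |⟪c, x⟫| ≤ ‖c‖ * ‖x‖ := abs_real_inner_le_norm c x
      _ = ‖x‖ := by rw [hc, one_mul]
      _ ≤ R := by simpa using mem_closedBall_zero_iff.1 (hRK hx)
  have hcont : ∀ t : ℝ, ContinuousOn (fun x : EuclideanSpace ℝ (Fin n) =>
      Real.exp (-t * ⟪c, x⟫)) K :=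
    fun t => (Real.continuous_exp.comp (continuous_const.mul hinner)).continuousOn
  have main := hasDerivAt_integral_of_dominated_loc_of_deriv_le
    (F := fun (t : ℝ) (x : EuclideanSpace ℝ (Fin n)) => Real.exp (-t * ⟪c, x⟫))
    (F' := fun (t : ℝ) (x : EuclideanSpace ℝ (Fin n)) => -⟪c, x⟫ * Real.exp (-t * ⟪c, x⟫))
    (μ := volume.restrict K) (x₀ := l)
    (bound := fun _ => R * Real.exp ((|l| + 1) * R))
    (Metric.ball_mem_nhds l one_pos)
    (Filter.Eventually.of_forall fun t =>
      ((Real.continuous_exp.comp (continuous_const.mul hinner)).aestronglyMeasurable))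
    ((hcont l).integrableOn_compact hKcomp)
    ((hinner.neg.mul
      (Real.continuous_exp.comp (continuous_const.mul hinner))).aestronglyMeasurable)
    ?_ ?_ ?_
  · exact main.2
  · -- bound
    rw [ae_restrict_iff' hK]
    refine Filter.Eventually.of_forall fun x hx => fun t ht => ?_
    have h1 : |⟪c, x⟫| ≤ R := hbound_inner x hx
    have h2 : |t| ≤ |l| + 1 := by
      have := mem_ball_iff_norm.1 ht
      rw [Real.norm_eq_abs] at this
      calc |t| = |l + (t - l)| := by ring_nf
        _ ≤ |l| + |t - l| := abs_add_le _ _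
        _ ≤ |l| + 1 := by linarith
    have h3 : -t * ⟪c, x⟫ ≤ (|l| + 1) * R := by
      calc -t * ⟪c, x⟫ ≤ |(-t) * ⟪c, x⟫| := le_abs_self _
        _ = |t| * |⟪c, x⟫| := by rw [abs_mul, abs_neg]
        _ ≤ (|l| + 1) * R := by
            apply mul_le_mul h2 h1 (abs_nonneg _) (by linarith [abs_nonneg l])
    calc ‖-⟪c, x⟫ * Real.exp (-t * ⟪c, x⟫)‖
        = |⟪c, x⟫| * Real.exp (-t * ⟪c, x⟫) := by
          rw [Real.norm_eq_abs, abs_mul, abs_neg, Real.abs_exp]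
      _ ≤ R * Real.exp ((|l| + 1) * R) :=
          mul_le_mul h1 (Real.exp_le_exp.2 h3) (Real.exp_pos _).le (by linarith)
  · -- bound integrable
    exact integrableOn_const hKcomp.measure_lt_top.ne
  · -- differentiability
    refine Filter.Eventually.of_forall fun x => fun t _ => ?_
    have h := ((hasDerivAt_id t).neg.mul_const (⟪c, x⟫ : ℝ)).exp
    simpa [mul_comm] using h

theorem stmt11 (n : ℕ) (K : Set (EuclideanSpace ℝ (Fin n)))
    (hKcomp : IsCompact K) (hKconv : Convex ℝ K) (hKint : (interior K).Nonempty)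
    (c : EuclideanSpace ℝ (Fin n)) (hc : ‖c‖ = 1) (T : ℝ) (hT : 0 < T) :
    (∫ x in K, ⟪c, x⟫ * Real.exp (-⟪c, x⟫ / T)) /
        (∫ x in K, Real.exp (-⟪c, x⟫ / T)) ≤
      n * T + sInf ((fun x => ⟪c, x⟫) '' K) := by
  have hKne : K.Nonempty := ⟨hKint.choose, interior_subset hKint.choose_spec⟩
  have hK : MeasurableSet K := hKcomp.measurableSet
  set l : ℝ := T⁻¹ with hl
  have hl0 : 0 < l := inv_pos.2 hT
  have hlT : l * T = 1 := inv_mul_cancel₀ (ne_of_gt hT)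
  have hinner : Continuous fun y : EuclideanSpace ℝ (Fin n) => ⟪c, y⟫ :=
    Continuous.inner continuous_const continuous_id
  -- minimizer
  obtain ⟨xs, hxs, hmin'⟩ := hKcomp.exists_isMinOn hKne hinner.continuousOn
  have hmin : ∀ x ∈ K, ⟪c, xs⟫ ≤ ⟪c, x⟫ := fun x hx => hmin' hx
  set m : ℝ := ⟪c, xs⟫ with hm
  have hsInf : sInf ((fun x => ⟪c, x⟫) '' K) = m := by
    refine IsLeast.csInf_eq ⟨⟨xs, hxs, rfl⟩, ?_⟩
    rintro y ⟨x, hx, rfl⟩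
    exact hmin x hx
  rw [hsInf]
  -- rewrite exponents
  have hrw1 : (∫ x in K, ⟪c, x⟫ * Real.exp (-⟪c, x⟫ / T))
      = ∫ x in K, ⟪c, x⟫ * Real.exp (-l * ⟪c, x⟫) := by
    refine setIntegral_congr_fun hK (fun x _ => ?_)
    rw [show -⟪c, x⟫ / T = -l * ⟪c, x⟫ by rw [hl]; ring]
  have hrw2 : (∫ x in K, Real.exp (-⟪c, x⟫ / T))
      = ∫ x in K, Real.exp (-l * ⟪c, x⟫) := by
    refine setIntegral_congr_fun hK (fun x _ => ?_)
    rw [show -⟪c, x⟫ / T = -l * ⟪c, x⟫ by rw [hl]; ring]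
  rw [hrw1, hrw2]
  set Z : ℝ → ℝ := fun t => ∫ x in K, Real.exp (-t * ⟪c, x⟫) with hZ
  set N : ℝ := ∫ x in K, ⟪c, x⟫ * Real.exp (-l * ⟪c, x⟫) with hN
  -- positivity of Z l
  obtain ⟨R, hR0, hRK⟩ := hKcomp.isBounded.subset_closedBall_lt 0 0
  have hbound_inner : ∀ x ∈ K, |⟪c, x⟫| ≤ R := by
    intro x hx
    calc |⟪c, x⟫| ≤ ‖c‖ * ‖x‖ := abs_real_inner_le_norm c x
      _ = ‖x‖ := by rw [hc, one_mul]
      _ ≤ R := by simpa using mem_closedBall_zero_iff.1 (hRK hx)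
  have hKvolpos : 0 < volume K :=
    lt_of_lt_of_le (isOpen_interior.measure_pos volume hKint) (measure_mono interior_subset)
  have hIntZ : ∀ t : ℝ, IntegrableOn (fun x : EuclideanSpace ℝ (Fin n) =>
      Real.exp (-t * ⟪c, x⟫)) K :=
    fun t => ((Real.continuous_exp.comp (continuous_const.mul hinner)).continuousOn).integrableOn_compact hKcomp
  have hZpos : 0 < Z l := by
    have hle : ∀ x ∈ K, Real.exp (-(l * R)) ≤ Real.exp (-l * ⟪c, x⟫) := by
      intro x hx
      apply Real.exp_le_exp.2
      have := (abs_le.1 (hbound_inner x hx)).2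
      nlinarith [hl0]
    calc (0:ℝ) < (volume K).toReal * Real.exp (-(l * R)) := by
          apply mul_pos _ (Real.exp_pos _)
          exact ENNReal.toReal_pos (ne_of_gt hKvolpos) hKcomp.measure_lt_top.ne
      _ = ∫ _ in K, Real.exp (-(l * R)) := by
          rw [setIntegral_const, smul_eq_mul]; rfl
      _ ≤ Z l := by
          refine setIntegral_mono_on (integrableOn_const hKcomp.measure_lt_top.ne)
            (hIntZ l) hK hle
  -- derivative of G at l is nonnegative
  set e : ℝ := Real.exp (l * m) with he
  have h1 : HasDerivAt (fun t : ℝ => t ^ n) (↑n * l ^ (n - 1)) l := hasDerivAt_pow n l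
  have h2 : HasDerivAt (fun t : ℝ => Real.exp (t * m)) (Real.exp (l * m) * (1 * m)) l :=
    HasDerivAt.exp ((hasDerivAt_id l).mul_const m)
  have hZd : HasDerivAt Z (∫ x in K, -⟪c, x⟫ * Real.exp (-l * ⟪c, x⟫)) l :=
    aux_deriv' n K hKcomp c hc
  have hG : HasDerivAt (fun t => t ^ n * Real.exp (t * m) * Z t)
      ((↑n * l ^ (n - 1) * Real.exp (l * m) + l ^ n * (Real.exp (l * m) * (1 * m))) * Z l
        + l ^ n * Real.exp (l * m) * ∫ x in K, -⟪c, x⟫ * Real.exp (-l * ⟪c, x⟫)) l :=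
    (h1.mul h2).mul hZd
  have hD : 0 ≤ (↑n * l ^ (n - 1) * Real.exp (l * m) + l ^ n * (Real.exp (l * m) * (1 * m))) * Z l
        + l ^ n * Real.exp (l * m) * ∫ x in K, -⟪c, x⟫ * Real.exp (-l * ⟪c, x⟫) := by
    refine aux_deriv_nonneg' (fun a b hla hab => ?_) hG
    exact aux_mono' n K hKcomp hKconv c xs hxs (lt_of_lt_of_le hl0 hla) hab
  have hNeg : (∫ x in K, -⟪c, x⟫ * Real.exp (-l * ⟪c, x⟫)) = -N := by
    rw [hN, ← integral_neg]
    refine setIntegral_congr_fun hK (fun x _ => by ring)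
  rw [hNeg] at hD
  -- key power identity
  have hkey : (n : ℝ) * l ^ (n - 1) = (n : ℝ) * l ^ n * T := by
    cases n with
    | zero => simp
    | succ k =>
      have : l ^ (k + 1) * T = l ^ k := by
        rw [pow_succ, mul_assoc, hlT, mul_one]
      simp only [Nat.add_sub_cancel]
      rw [mul_assoc, this]
  -- conclude
  rw [div_le_iff₀ hZpos]
  have hPpos : 0 < l ^ n * Real.exp (l * m) := by positivity
  have step : l ^ n * Real.exp (l * m) * N ≤ l ^ n * Real.exp (l * m) * ((↑n * T + m) * Z l) := by
    have expand : l ^ n * Real.exp (l * m) * ((↑n * T + m) * Z l)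
        = (↑n * l ^ n * T) * Real.exp (l * m) * Z l
          + l ^ n * (Real.exp (l * m) * (1 * m)) * Z l := by ring
    rw [expand, ← hkey]
    nlinarith [hD]
  exact le_of_mul_le_mul_left step hPpos
end
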